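/- If E is a centrally orthocomplete generalized pseudoeffect algebra (COGPEA), then for every e ∈ E the exocentral cover γ_e exists and γ_e = ⋀{π ∈ ΓEX(E) : πe = e}, the infimum being taken in the complete boolean algebra ΓEX(E). -/

import Mathlib

/- Common framework: generalized pseudoeffect algebras (GPEAs), after
   Foulis, Pulmannová, Vinceková, "The exocenter and type decompositions for
   generalized pseudoeffect algebras".
   A partial binary operation ⊕ is represented by its graph
   `R : E → E → E → Prop`, where `R a b s` means "a ⊕ b is defined and equals s". -/

universe u v

namespace GPEApaper

/-- Raw data of a partial algebra: the graph of a partial binary operation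
together with a zero element. -/
structure PartialAlg (E : Type u) where
  R : E → E → E → Prop
  zero : E

namespace PartialAlg

variable {E : Type u} (A : PartialAlg E)

/-- The axioms (GPEA1)–(GPEA5) of a generalized pseudoeffect algebra,
including the functionality (well-definedness) of the partial operation. -/
def IsGPEA : Prop :=
  -- ⊕ is a partial operation (single-valued)
  (∀ a b c d : E, A.R a b c → A.R a b d → c = d) ∧
  -- (GPEA1) associativity, both directions
  (∀ a b c ab abc : E, A.R a b ab → A.R ab c abc → ∃ bc, A.R b c bc ∧ A.R a bc abc) ∧
  (∀ a b c bc abc : E, A.R b c bc → A.R a bc abc → ∃ ab, A.R a b ab ∧ A.R ab c abc) ∧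
  -- (GPEA2) conjugacy
  (∀ a b s : E, A.R a b s → (∃ d, A.R d a s) ∧ (∃ e, A.R b e s)) ∧
  -- (GPEA3) cancellation
  (∀ a b c s : E, A.R a b s → A.R a c s → b = c) ∧
  (∀ a b c s : E, A.R b a s → A.R c a s → b = c) ∧
  -- (GPEA4) positivity
  (∀ a b : E, A.R a b A.zero → a = A.zero ∧ b = A.zero) ∧
  -- (GPEA5) zero element
  (∀ a : E, A.R a A.zero a ∧ A.R A.zero a a)

/-- a ⊕ b is defined. -/
def Defined (a b : E) : Prop := ∃ s, A.R a b s

/-- The induced partial order: a ≤ b iff a ⊕ x = b for some x. -/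
def le (a b : E) : Prop := ∃ x, A.R a x b

/-- Orthogonality: p ⊥ q iff p ⊕ q and q ⊕ p both exist and are equal. -/
def perp (a b : E) : Prop := ∃ s, A.R a b s ∧ A.R b a s

/-- b is an upper bound of the set S. -/
def IsUB (S : Set E) (b : E) : Prop := ∀ a ∈ S, A.le a b

/-- s is the supremum (least upper bound) of the set S in (E, ≤). -/
def IsSup (S : Set E) (s : E) : Prop := A.IsUB S s ∧ ∀ b, A.IsUB S b → A.le s b

/-- s is the infimum (greatest lower bound) of the set S in (E, ≤). -/
def IsInf (S : Set E) (s : E) : Prop :=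
  (∀ a ∈ S, A.le s a) ∧ ∀ b, (∀ a ∈ S, A.le b a) → A.le b s

/-- An ideal of a GPEA. -/
def IsIdeal (I : Set E) : Prop :=
  I.Nonempty ∧ (∀ a ∈ I, ∀ b, A.le b a → b ∈ I) ∧
    ∀ a ∈ I, ∀ b ∈ I, ∀ s, A.R a b s → s ∈ I

/-- E = S ⊕ S′ : S and S′ are ideals, elements of S are orthogonal to elements
of S′, and every element of E has a unique decomposition a = a₁ ⊕ a₂ with
a₁ ∈ S, a₂ ∈ S′. -/
def IsDirectSum (S S' : Set E) : Prop :=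
  A.IsIdeal S ∧ A.IsIdeal S' ∧ (∀ a ∈ S, ∀ b ∈ S', A.perp a b) ∧
    ∀ a : E, ∃! p : E × E, p.1 ∈ S ∧ p.2 ∈ S' ∧ A.R p.1 p.2 a

/-- A central ideal (direct summand). -/
def IsCentralIdeal (S : Set E) : Prop := ∃ S', A.IsDirectSum S S'

/-- A normal ideal. -/
def IsNormalIdeal (I : Set E) : Prop :=
  A.IsIdeal I ∧ ∀ a x y s : E, A.R a x s → A.R y a s → (x ∈ I ↔ y ∈ I)

/-- The axioms (EXC1)–(EXC4): π belongs to the exocenter ΓEX(E). -/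
def IsExo (π : E → E) : Prop :=
  (∀ e f s, A.R e f s → A.R (π e) (π f) (π s)) ∧
  (∀ e, π (π e) = π e) ∧
  (∀ e, A.le (π e) e) ∧
  (∀ e f, π e = e → π f = A.zero → A.perp e f)

/-- For a ≤ b, `A.rdiv a b` is the element a/b, i.e. the unique x with
a ⊕ x = b (chosen by Hilbert choice when it exists). -/
noncomputable def rdiv (a b : E) : E :=
  letI : Nonempty E := ⟨A.zero⟩
  Classical.epsilon fun x => A.R a x b

/-- For π in the exocenter, π′ e := (π e)/e. -/
noncomputable def exoCompl (π : E → E) : E → E := fun e => A.rdiv (π e) e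

/-- The order on the exocenter: ξ ≤ π iff ξ = ξ ∘ π. -/
def exoLe (_A : PartialAlg E) (ξ π : E → E) : Prop := ξ = ξ ∘ π

/-- Disjointness in the boolean algebra ΓEX(E): the meet (= composition)
of ξ and π is the zero map. -/
def exoDisjoint (ξ π : E → E) : Prop := ∀ e, ξ (π e) = A.zero

/-- The join in the boolean algebra ΓEX(E): π ∨ ξ = (π′ ∘ ξ′)′. -/
noncomputable def exoSup (π ξ : E → E) : E → E :=
  A.exoCompl (A.exoCompl π ∘ A.exoCompl ξ)

/-- σ is the least upper bound of a set S of exocenter elements,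
with respect to the order of the boolean algebra ΓEX(E). -/
def IsExoLUB (S : Set (E → E)) (σ : E → E) : Prop :=
  A.IsExo σ ∧ (∀ π ∈ S, A.exoLe π σ) ∧
    ∀ β, A.IsExo β → (∀ π ∈ S, A.exoLe π β) → A.exoLe σ β

/-- A central element (C1)–(C4). -/
def Central (c : E) : Prop :=
  (∀ a : E, ∃ a₁ a₂, A.le a₁ c ∧ A.Defined a₂ c ∧ A.R a₁ a₂ a) ∧
  (∀ a b : E, A.le a c → A.Defined b c → A.perp a b) ∧
  (∀ a b s : E, A.le a c → A.le b c → A.R a b s → A.le s c) ∧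
  (∀ a b ab : E, A.Defined a c → A.Defined b c → A.R a b ab → A.Defined ab c)

/-- `A.ListSumsTo [e₁, …, eₙ] s` : the orthosum e₁ ⊕ (e₂ ⊕ (⋯ ⊕ eₙ)) is
defined and equals s (empty orthosum is 0). -/
def ListSumsTo (A : PartialAlg E) : List E → E → Prop
  | [], s => s = A.zero
  | a :: l, s => ∃ t, A.ListSumsTo l t ∧ A.R a t s

/-- The finite subfamily indexed by F is orthogonal with orthosum s:
every enumeration of F yields the orthosum s. -/
def FinsetSumsTo {ι : Type v} (e : ι → E) (F : Finset ι) (s : E) : Prop :=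
  ∀ l : List ι, l.Nodup →
    (letI : DecidableEq ι := Classical.decEq ι; l.toFinset) = F →
    A.ListSumsTo (l.map e) s

/-- A family is orthogonal iff every finite subfamily is orthogonal
(all enumerations have a common orthosum). -/
def IsOrthogonal {ι : Type v} (e : ι → E) : Prop :=
  ∀ F : Finset ι, ∃ s, A.FinsetSumsTo e F s

/-- A family is orthosummable with orthosum s iff it is orthogonal and s is
the supremum of its finite partial orthosums. -/
def IsOrthosum {ι : Type v} (e : ι → E) (s : E) : Prop :=
  A.IsOrthogonal e ∧ A.IsSup {t | ∃ F : Finset ι, A.FinsetSumsTo e F t} s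

/-- A family (eᵢ) is ΓEX-orthogonal iff there is a pairwise disjoint family
(πᵢ) in the exocenter with πᵢ eᵢ = eᵢ for all i. -/
def GEXOrthogonal {ι : Type v} (e : ι → E) : Prop :=
  ∃ π : ι → E → E, (∀ i, A.IsExo (π i)) ∧
    (∀ i j, i ≠ j → A.exoDisjoint (π i) (π j)) ∧ ∀ i, π i (e i) = e i

/-- E is centrally orthocomplete: (CO1) every ΓEX-orthogonal family is
orthosummable, and (CO2) orthosums respect one-sided summability. -/
def IsCOGPEA : Prop :=
  (∀ {ι : Type u} (e : ι → E), A.GEXOrthogonal e → ∃ s, A.IsOrthosum e s) ∧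
  (∀ {ι : Type u} (e : ι → E) (s : E), A.GEXOrthogonal e → A.IsOrthosum e s →
    ∀ a : E, ((∀ i, A.Defined a (e i)) → A.Defined a s) ∧
             ((∀ i, A.Defined (e i) a) → A.Defined s a))

/-- γ is the exocentral cover of e: the smallest element of ΓEX(E) fixing e. -/
def IsExoCover (e : E) (γ : E → E) : Prop :=
  A.IsExo γ ∧ γ e = e ∧ ∀ π, A.IsExo π → π e = e → A.exoLe γ π

/-- The restriction of the partial algebra to a subset containing 0 (with the
operation defined whenever it is defined in E and the result lies in the subset). -/
def restrictSet (S : Set E) (h0 : A.zero ∈ S) : PartialAlg S where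
  R a b s := A.R a.1 b.1 s.1
  zero := ⟨A.zero, h0⟩

/-- The axioms (PEA1)–(PEA4) of a pseudoeffect algebra with unit `one`
(including single-valuedness of the partial operation). -/
def IsPEA (one : E) : Prop :=
  (∀ a b c d : E, A.R a b c → A.R a b d → c = d) ∧
  -- (PEA1)
  (∀ a b c ab abc : E, A.R a b ab → A.R ab c abc → ∃ bc, A.R b c bc ∧ A.R a bc abc) ∧
  (∀ a b c bc abc : E, A.R b c bc → A.R a bc abc → ∃ ab, A.R a b ab ∧ A.R ab c abc) ∧
  -- (PEA2)
  (∀ a : E, ∃! d, A.R a d one) ∧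
  (∀ a : E, ∃! e, A.R e a one) ∧
  -- (PEA3)
  (∀ a b s : E, A.R a b s → (∃ d, A.R d a s) ∧ (∃ e, A.R b e s)) ∧
  -- (PEA4)
  (∀ a s : E, A.R one a s ∨ A.R a one s → a = A.zero)

end PartialAlg

end GPEApaper

namespace GPEApaper
namespace PartialAlg
set_option linter.unusedSectionVars false

variable {E : Type u} {A : PartialAlg E}

section Basic

variable (hA : A.IsGPEA)
include hA

theorem gFunc : ∀ a b c d : E, A.R a b c → A.R a b d → c = d := hA.1
theorem gAssoc1 : ∀ a b c ab abc : E, A.R a b ab → A.R ab c abc →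
    ∃ bc, A.R b c bc ∧ A.R a bc abc := hA.2.1
theorem gAssoc2 : ∀ a b c bc abc : E, A.R b c bc → A.R a bc abc →
    ∃ ab, A.R a b ab ∧ A.R ab c abc := hA.2.2.1
theorem gConj : ∀ a b s : E, A.R a b s → (∃ d, A.R d a s) ∧ ∃ e, A.R b e s := hA.2.2.2.1
theorem gCancL : ∀ a b c s : E, A.R a b s → A.R a c s → b = c := hA.2.2.2.2.1
theorem gCancR : ∀ a b c s : E, A.R b a s → A.R c a s → b = c := hA.2.2.2.2.2.1
theorem gPos : ∀ a b : E, A.R a b A.zero → a = A.zero ∧ b = A.zero := hA.2.2.2.2.2.2.1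
theorem gZeroR : ∀ a : E, A.R a A.zero a := fun a => (hA.2.2.2.2.2.2.2 a).1
theorem gZeroL : ∀ a : E, A.R A.zero a a := fun a => (hA.2.2.2.2.2.2.2 a).2

theorem le_refl' (a : E) : A.le a a := ⟨A.zero, gZeroR hA a⟩

theorem zero_le' (a : E) : A.le A.zero a := ⟨a, gZeroL hA a⟩

theorem le_of_R {a x b : E} (h : A.R a x b) : A.le a b := ⟨x, h⟩

theorem le_of_R_right {y a b : E} (h : A.R y a b) : A.le a b :=
  (gConj hA _ _ _ h).2

theorem le_iff_right {a b : E} : A.le a b ↔ ∃ y, A.R y a b := by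
  constructor
  · rintro ⟨x, hx⟩; exact (gConj hA _ _ _ hx).1
  · rintro ⟨y, hy⟩; exact le_of_R_right hA hy

theorem le_trans' {a b c : E} (h1 : A.le a b) (h2 : A.le b c) : A.le a c := by
  obtain ⟨x, hx⟩ := h1; obtain ⟨y, hy⟩ := h2
  obtain ⟨z, hz, hz'⟩ := gAssoc1 hA a x y b c hx hy
  exact ⟨z, hz'⟩

theorem eq_zero_of_le_zero {a : E} (h : A.le a A.zero) : a = A.zero := by
  obtain ⟨x, hx⟩ := h; exact (gPos hA _ _ hx).1

theorem le_antisymm' {a b : E} (h1 : A.le a b) (h2 : A.le b a) : a = b := by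
  obtain ⟨x, hx⟩ := h1; obtain ⟨y, hy⟩ := h2
  obtain ⟨z, hz, hz'⟩ := gAssoc1 hA a x y b a hx hy
  have hz0 : z = A.zero := gCancL hA a z A.zero a hz' (gZeroR hA a)
  have hx0 : x = A.zero := (gPos hA x y (hz0 ▸ hz)).1
  exact gFunc hA a A.zero b a (hx0 ▸ hx) (gZeroR hA a) |>.symm ▸ rfl

theorem perp_symm {a b : E} (h : A.perp a b) : A.perp b a := by
  obtain ⟨s, h1, h2⟩ := h; exact ⟨s, h2, h1⟩

theorem sup_unique {S : Set E} {s t : E} (hs : A.IsSup S s) (ht : A.IsSup S t) : s = t :=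
  le_antisymm' hA (hs.2 t ht.1) (ht.2 s hs.1)

end Basic

section Exo

variable (hA : A.IsGPEA)
include hA

omit hA in
theorem exo_add {π : E → E} (hπ : A.IsExo π) {e f s : E} (h : A.R e f s) :
    A.R (π e) (π f) (π s) := hπ.1 e f s h

omit hA in
theorem exo_idem {π : E → E} (hπ : A.IsExo π) (e : E) : π (π e) = π e := hπ.2.1 e

omit hA in
theorem exo_le {π : E → E} (hπ : A.IsExo π) (e : E) : A.le (π e) e := hπ.2.2.1 e

omit hA in
theorem exo_perp {π : E → E} (hπ : A.IsExo π) {e f : E} (he : π e = e)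
    (hf : π f = A.zero) : A.perp e f := hπ.2.2.2 e f he hf

omit hA in
theorem exo_mono {π : E → E} (hπ : A.IsExo π) {a b : E} (h : A.le a b) :
    A.le (π a) (π b) := by
  obtain ⟨x, hx⟩ := h; exact ⟨π x, hπ.1 _ _ _ hx⟩

theorem exo_zero {π : E → E} (hπ : A.IsExo π) : π A.zero = A.zero :=
  eq_zero_of_le_zero hA (exo_le hπ A.zero)

theorem exo_zero_of_le_zero {π : E → E} (hπ : A.IsExo π) {a b : E}
    (h : A.le a b) (hb : π b = A.zero) : π a = A.zero :=
  eq_zero_of_le_zero hA (hb ▸ exo_mono hπ h)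

theorem decomp {π : E → E} (hπ : A.IsExo π) (f : E) :
    A.R (π f) (A.exoCompl π f) f := by
  have h : ∃ x, A.R (π f) x f := exo_le hπ f
  exact Classical.epsilon_spec h

theorem compl_unique {π : E → E} (hπ : A.IsExo π) {f x : E}
    (h : A.R (π f) x f) : x = A.exoCompl π f :=
  gCancL hA _ _ _ _ h (decomp hA hπ f)

theorem apply_compl_zero {π : E → E} (hπ : A.IsExo π) (f : E) :
    π (A.exoCompl π f) = A.zero := by
  have h := exo_add hπ (decomp hA hπ f)
  rw [exo_idem hπ] at h
  exact (gCancL hA _ _ _ _ h (gZeroR hA (π f))).symm ▸ rfl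

theorem compl_apply_zero {π : E → E} (hπ : A.IsExo π) (f : E) :
    A.exoCompl π (π f) = A.zero := by
  have h := decomp hA hπ (π f)
  rw [exo_idem hπ] at h
  exact gCancL hA _ _ _ _ h (gZeroR hA (π f))

theorem compl_eq_zero_of_fix {π : E → E} (hπ : A.IsExo π) {f : E}
    (h : π f = f) : A.exoCompl π f = A.zero := by
  have hd := decomp hA hπ f
  rw [h] at hd
  exact (gCancL hA _ _ _ _ hd (gZeroR hA f)).symm ▸ rfl

theorem fix_of_compl_eq_zero {π : E → E} (hπ : A.IsExo π) {f : E}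
    (h : A.exoCompl π f = A.zero) : π f = f := by
  have hd := decomp hA hπ f
  rw [h] at hd
  exact (gFunc hA _ _ _ _ (gZeroR hA (π f)) hd)

theorem compl_fix_of_zero {π : E → E} (hπ : A.IsExo π) {f : E}
    (h : π f = A.zero) : A.exoCompl π f = f := by
  have hd := decomp hA hπ f
  rw [h] at hd
  exact gCancL hA _ _ _ _ hd (gZeroL hA f)

theorem zero_of_compl_fix {π : E → E} (hπ : A.IsExo π) {f : E}
    (h : A.exoCompl π f = f) : π f = A.zero := by
  have hd := decomp hA hπ f
  rw [h] at hd
  exact gCancR hA _ _ _ _ hd (gZeroL hA f)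

theorem compl_add {π : E → E} (hπ : A.IsExo π) {e f s : E} (h : A.R e f s) :
    A.R (A.exoCompl π e) (A.exoCompl π f) (A.exoCompl π s) := by
  have hde := decomp hA hπ e
  have hdf := decomp hA hπ f
  have hds := decomp hA hπ s
  have hadd := exo_add hπ h
  -- π f ⊥ π' e
  obtain ⟨t, ht1, ht2⟩ := exo_perp hπ (exo_idem hπ f) (apply_compl_zero hA hπ e)
  -- step 1 : ∃ u, π'e ⊕ f = u and πe ⊕ u = s
  obtain ⟨u, hu1, hu2⟩ := gAssoc1 hA _ _ _ _ _ hde h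
  -- step 2 : from f = πf ⊕ π'f and π'e ⊕ f = u
  obtain ⟨v, hv1, hv2⟩ := gAssoc2 hA _ _ _ _ _ hdf hu1
  have hvt : v = t := gFunc hA _ _ _ _ hv1 ht2
  rw [hvt] at hv2
  -- step 3 : from πf ⊕ π'e = t and t ⊕ π'f = u
  obtain ⟨w, hw1, hw2⟩ := gAssoc1 hA _ _ _ _ _ ht1 hv2
  -- step 4
  obtain ⟨z, hz1, hz2⟩ := gAssoc2 hA _ _ _ _ _ hw2 hu2
  have hzs : z = π s := gFunc hA _ _ _ _ hz1 hadd
  rw [hzs] at hz2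
  have : w = A.exoCompl π s := gCancL hA _ _ _ _ hz2 hds
  rwa [this] at hw1

theorem compl_mono {π : E → E} (hπ : A.IsExo π) {a b : E} (h : A.le a b) :
    A.le (A.exoCompl π a) (A.exoCompl π b) := by
  obtain ⟨x, hx⟩ := h; exact ⟨A.exoCompl π x, compl_add hA hπ hx⟩

theorem fix_of_le_fix {π : E → E} (hπ : A.IsExo π) {a b : E}
    (hab : A.le a b) (hb : π b = b) : π a = a := by
  have h1 : A.exoCompl π b = A.zero := compl_eq_zero_of_fix hA hπ hb
  have h2 : A.le (A.exoCompl π a) (A.exoCompl π b) := compl_mono hA hπ hab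
  rw [h1] at h2
  exact fix_of_compl_eq_zero hA hπ (eq_zero_of_le_zero hA h2)

theorem exo_commute {π ξ : E → E} (hπ : A.IsExo π) (hξ : A.IsExo ξ) (f : E) :
    π (ξ f) = ξ (π f) := by
  have h1 : A.R (ξ (π f)) (ξ (A.exoCompl π f)) (ξ f) := exo_add hξ (decomp hA hπ f)
  have h2 := exo_add hπ h1
  have e1 : π (ξ (π f)) = ξ (π f) :=
    fix_of_le_fix hA hπ (exo_le hξ (π f)) (exo_idem hπ f)
  have e2 : π (ξ (A.exoCompl π f)) = A.zero :=
    exo_zero_of_le_zero hA hπ (exo_le hξ _) (apply_compl_zero hA hπ f)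
  rw [e1, e2] at h2
  exact gFunc hA _ _ _ _ h2 (gZeroR hA _)

theorem comp_exo {π ξ : E → E} (hπ : A.IsExo π) (hξ : A.IsExo ξ) :
    A.IsExo (π ∘ ξ) := by
  refine ⟨fun e f s h => exo_add hπ (exo_add hξ h), ?_, ?_, ?_⟩
  · intro e
    show π (ξ (π (ξ e))) = π (ξ e)
    rw [exo_commute hA hξ hπ (ξ e), exo_idem hπ, exo_idem hξ]
  · intro e
    exact le_trans' hA (exo_le hπ (ξ e)) (exo_le hξ e)
  · intro e f he hf
    replace he : π (ξ e) = e := he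
    replace hf : π (ξ f) = A.zero := hf
    have hξe : ξ e = e := by
      have h1 := exo_le hπ (ξ e)
      rw [he] at h1
      exact le_antisymm' hA (exo_le hξ e) h1
    have hπe : π e = e := by
      have h2 := he; rw [hξe] at h2; exact h2
    -- perp e (ξ f) and perp e (ξ' f)
    obtain ⟨t1, ht1a, ht1b⟩ := exo_perp hπ hπe hf
    obtain ⟨t2, ht2a, ht2b⟩ :=
      exo_perp hξ hξe (apply_compl_zero hA hξ f)
    -- ξ t1 = t1
    have hξt1 : ξ t1 = t1 := by
      have h1 : A.R (ξ e) (ξ (ξ f)) (ξ t1) := exo_add hξ ht1a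
      rw [hξe, exo_idem hξ] at h1
      exact gFunc hA _ _ _ _ h1 ht1a
    obtain ⟨w, hw1, hw2⟩ :=
      exo_perp hξ hξt1 (apply_compl_zero hA hξ f)
    -- (i) R e f w
    obtain ⟨bc, hbc1, hbc2⟩ := gAssoc1 hA _ _ _ _ _ ht1a hw1
    have hbcf : bc = f := gFunc hA _ _ _ _ hbc1 (decomp hA hξ f)
    rw [hbcf] at hbc2
    -- (ii) R f e w
    obtain ⟨g1, hg1, hg2⟩ := gAssoc2 hA _ _ _ _ _ ht1b hw2
    obtain ⟨ab2, hab2a, hab2b⟩ := gAssoc2 hA _ _ _ _ _ ht1a hw2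
    have : ab2 = t2 := gFunc hA _ _ _ _ hab2a ht2b
    rw [this] at hab2b
    obtain ⟨bc2, hbc2a, hbc2b⟩ := gAssoc1 hA _ _ _ _ _ ht2a hab2b
    have h5 : bc2 = g1 := gFunc hA _ _ _ _ hbc2a hg1
    have h6 : bc2 = f := gCancL hA _ _ _ _ hbc2b hbc2
    rw [h5.symm.trans h6] at hg2
    exact ⟨w, hbc2, hg2⟩

theorem compl_exo {π : E → E} (hπ : A.IsExo π) : A.IsExo (A.exoCompl π) := by
  refine ⟨fun e f s h => compl_add hA hπ h, ?_, ?_, ?_⟩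
  · intro e
    exact compl_fix_of_zero hA hπ (apply_compl_zero hA hπ e)
  · intro e
    exact le_of_R_right hA (decomp hA hπ e)
  · intro e f he hf
    have h1 : π e = A.zero := zero_of_compl_fix hA hπ he
    have h2 : π f = f := fix_of_compl_eq_zero hA hπ hf
    exact perp_symm hA (exo_perp hπ h2 h1)

theorem compl_compl {π : E → E} (hπ : A.IsExo π) :
    A.exoCompl (A.exoCompl π) = π := by
  funext f
  obtain ⟨s, hs1, hs2⟩ :=
    exo_perp hπ (exo_idem hπ f) (apply_compl_zero hA hπ f)
  have hsf : s = f := gFunc hA _ _ _ _ hs1 (decomp hA hπ f)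
  rw [hsf] at hs2
  exact (compl_unique hA (compl_exo hA hπ) hs2).symm

theorem compl_antitone {π ξ : E → E} (hπ : A.IsExo π) (hξ : A.IsExo ξ)
    (h : A.exoLe ξ π) : A.exoLe (A.exoCompl π) (A.exoCompl ξ) := by
  have key : ∀ f, A.exoCompl π (A.exoCompl ξ f) = A.exoCompl π f := by
    intro f
    have h1 : A.R (A.exoCompl π (ξ f)) (A.exoCompl π (A.exoCompl ξ f))
        (A.exoCompl π f) := compl_add hA hπ (decomp hA hξ f)
    have h2 : A.exoCompl π (ξ f) = A.zero := by
      have h3 : ξ (A.exoCompl π f) = A.zero := by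
        have h4 := congrFun h (A.exoCompl π f)
        simp only [Function.comp] at h4
        rw [h4, apply_compl_zero hA hπ, exo_zero hA hξ]
      rw [exo_commute hA (compl_exo hA hπ) hξ f, h3]
    rw [h2] at h1
    exact (gFunc hA _ _ _ _ h1 (gZeroL hA _)).symm
  funext f
  exact (key f).symm

end Exo

section Lists

variable {ι : Type v} (hA : A.IsGPEA)
include hA

omit hA in
theorem listSum_unique : ∀ {l : List E} {s t : E},
    A.ListSumsTo l s → A.ListSumsTo l t → (∀ a b c d : E, A.R a b c → A.R a b d → c = d) →
    s = t := by
  intro l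
  induction l with
  | nil => intro s t hs ht _; exact hs.trans ht.symm
  | cons a l ih =>
    rintro s t ⟨u, hu, hus⟩ ⟨v, hv, hvt⟩ hfunc
    have := ih hu hv hfunc
    subst this
    exact hfunc _ _ _ _ hus hvt

theorem listSum_zero {l : List E} (hl : ∀ x ∈ l, x = A.zero) {s : E}
    (hs : A.ListSumsTo l s) : s = A.zero := by
  induction l generalizing s with
  | nil => exact hs
  | cons a l ih =>
    obtain ⟨t, ht, hts⟩ := hs
    have ha : a = A.zero := hl a (by simp)
    have ht0 : t = A.zero := ih (fun x hx => hl x (by simp [hx])) ht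
    rw [ha, ht0] at hts
    exact gFunc hA _ _ _ _ hts (gZeroR hA A.zero)

variable {p : ι → E → E} (hexo : ∀ i, A.IsExo (p i))
  (hdis : ∀ i j, i ≠ j → A.exoDisjoint (p i) (p j))
include hexo hdis

theorem listSum_props {g : E} : ∀ {l : List ι} {u : E}, l.Nodup →
    A.ListSumsTo (l.map fun i => p i g) u →
    A.le u g ∧ (∀ j, j ∉ l → p j u = A.zero) ∧ (∀ j, j ∈ l → p j u = p j g) := by
  intro l
  induction l with
  | nil =>
    intro u _ hu
    have : u = A.zero := hu
    subst this
    exact ⟨zero_le' hA g, fun j _ => exo_zero hA (hexo j), fun j hj => absurd hj (by simp)⟩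
  | cons i l ih =>
    intro u hnd hu
    obtain ⟨hil, hndl⟩ := List.nodup_cons.mp hnd
    obtain ⟨t, ht, htu⟩ := hu
    obtain ⟨htg, ht0, htfix⟩ := ih hndl ht
    have hit : p i t = A.zero := ht0 i hil
    refine ⟨?_, ?_, ?_⟩
    · -- u ≤ g
      have h1 : A.le t (A.exoCompl (p i) g) := by
        have h2 := compl_mono hA (hexo i) htg
        rwa [compl_fix_of_zero hA (hexo i) hit] at h2
      obtain ⟨y, hy⟩ := h1
      obtain ⟨ab, hab1, hab2⟩ := gAssoc2 hA _ _ _ _ _ hy (decomp hA (hexo i) g)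
      have : ab = u := gFunc hA _ _ _ _ hab1 htu
      rw [this] at hab2
      exact ⟨y, hab2⟩
    · intro j hj
      have hji : j ≠ i := fun h => hj (h ▸ (List.mem_cons_self : i ∈ i :: l))
      have hjl : j ∉ l := fun h => hj (List.mem_cons_of_mem i h)
      have h1 := exo_add (hexo j) htu
      rw [hdis j i hji g, ht0 j hjl] at h1
      exact gFunc hA _ _ _ _ h1 (gZeroR hA A.zero)
    · intro j hj
      rcases List.mem_cons.mp hj with h | h
      · subst h
        have h1 := exo_add (hexo j) htu
        rw [exo_idem (hexo j), hit] at h1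
        exact gFunc hA _ _ _ _ h1 (gZeroR hA _)
      · have hji : j ≠ i := fun he => (he ▸ hil) h
        have h1 := exo_add (hexo j) htu
        rw [hdis j i hji g, htfix j h] at h1
        exact gFunc hA _ _ _ _ h1 (gZeroL hA _)

omit hexo hdis in
theorem id_exo : A.IsExo id := by
  refine ⟨fun e f s h => h, fun e => rfl, fun e => le_refl' hA e, ?_⟩
  intro e f _ hf
  show A.perp e f
  have : f = A.zero := hf
  subst this
  exact ⟨e, gZeroR hA e, gZeroL hA e⟩

end Lists

section CompList

variable {ι : Type v} (hA : A.IsGPEA)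

/-- Composition of the complements of `p i` over a list. -/
noncomputable def compList (A : PartialAlg E) (p : ι → E → E) : List ι → E → E :=
  fun l => l.foldr (fun i τ => A.exoCompl (p i) ∘ τ) id

include hA

variable {p : ι → E → E} (hexo : ∀ i, A.IsExo (p i))
include hexo

theorem compList_exo : ∀ l : List ι, A.IsExo (compList A p l) := by
  intro l
  induction l with
  | nil => exact id_exo hA
  | cons i l ih =>
    show A.IsExo (A.exoCompl (p i) ∘ compList A p l)
    exact comp_exo hA (compl_exo hA (hexo i)) ih

theorem compList_fix {x : E} : ∀ {l : List ι}, (∀ j ∈ l, p j x = A.zero) →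
    compList A p l x = x := by
  intro l
  induction l with
  | nil => intro _; rfl
  | cons i l ih =>
    intro h
    show A.exoCompl (p i) (compList A p l x) = x
    rw [ih (fun j hj => h j (List.mem_cons_of_mem i hj))]
    exact compl_fix_of_zero hA (hexo i) (h i (List.mem_cons_self : i ∈ i :: l))

variable (hdis : ∀ i j, i ≠ j → A.exoDisjoint (p i) (p j))
include hdis

theorem compList_killsum {g : E} : ∀ {l : List ι} {u : E}, l.Nodup →
    A.ListSumsTo (l.map fun i => p i g) u → compList A p l u = A.zero := by
  intro l
  induction l with
  | nil =>
    intro u _ hu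
    have : u = A.zero := hu
    subst this
    rfl
  | cons i l ih =>
    intro u hnd hu
    obtain ⟨hil, hndl⟩ := List.nodup_cons.mp hnd
    obtain ⟨t, ht, htu⟩ := hu
    show A.exoCompl (p i) (compList A p l u) = A.zero
    have hτ : A.IsExo (compList A p l) := compList_exo hA hexo l
    have h1 := exo_add hτ htu
    rw [ih hndl ht] at h1
    have h2 : compList A p l (p i g) = p i g :=
      compList_fix hA hexo (fun j hj => hdis j i (fun he => (he ▸ hil) hj) g)
    rw [h2] at h1
    have h3 : compList A p l u = p i g := gFunc hA _ _ _ _ h1 (gZeroR hA _)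
    rw [h3]
    exact compl_apply_zero hA (hexo i) g

theorem listSum_add {e f s : E} (hefs : A.R e f s) :
    ∀ {l : List ι} {u v w : E}, l.Nodup →
    A.ListSumsTo (l.map fun i => p i e) u →
    A.ListSumsTo (l.map fun i => p i f) v →
    A.ListSumsTo (l.map fun i => p i s) w → A.R u v w := by
  intro l
  induction l with
  | nil =>
    intro u v w _ hu hv hw
    have hu' : u = A.zero := hu
    have hv' : v = A.zero := hv
    have hw' : w = A.zero := hw
    subst hu'; subst hv'; subst hw'
    exact gZeroR hA A.zero
  | cons i l ih =>
    intro u v w hnd hu hv hw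
    obtain ⟨hil, hndl⟩ := List.nodup_cons.mp hnd
    obtain ⟨u', hu', huu⟩ := hu
    obtain ⟨v', hv', hvv⟩ := hv
    obtain ⟨w', hw', hww⟩ := hw
    have hIH : A.R u' v' w' := ih hndl hu' hv' hw'
    have hpi : A.R (p i e) (p i f) (p i s) := exo_add (hexo i) hefs
    have hpu' : p i u' = A.zero :=
      (listSum_props hA hexo hdis hndl hu').2.1 i hil
    obtain ⟨t, ht1, ht2⟩ :=
      exo_perp (hexo i) (exo_idem (hexo i) f) hpu'
    obtain ⟨x, hx1, hx2⟩ := gAssoc1 hA _ _ _ _ _ hpi hww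
    obtain ⟨y, hy1, hy2⟩ := gAssoc2 hA _ _ _ _ _ hIH hx1
    have hyt : y = t := gFunc hA _ _ _ _ hy1 ht1
    rw [hyt] at hy2
    obtain ⟨z, hz1, hz2⟩ := gAssoc1 hA _ _ _ _ _ ht2 hy2
    have hzv : z = v := gFunc hA _ _ _ _ hz1 hvv
    rw [hzv] at hz2
    obtain ⟨q, hq1, hq2⟩ := gAssoc2 hA _ _ _ _ _ hz2 hx2
    have hqu : q = u := gFunc hA _ _ _ _ hq1 huu
    rw [hqu] at hq2
    exact hq2

end CompList

section FinsetHelp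

variable {ι : Type v} (hA : A.IsGPEA)
include hA

omit hA in
theorem list_eq_nil_of_toFinset {l : List ι} (inst : DecidableEq ι)
    (h : @List.toFinset ι inst l = ∅) : l = [] := by
  cases l with
  | nil => rfl
  | cons a l =>
    exfalso
    have : a ∈ @List.toFinset ι inst (a :: l) := by
      simp [List.mem_toFinset]
    rw [h] at this
    exact absurd this (Finset.notMem_empty a)

omit hA in
theorem list_eq_singleton_of_toFinset {l : List ι} {j : ι} (inst : DecidableEq ι)
    (hnd : l.Nodup) (h : @List.toFinset ι inst l = {j}) : l = [j] := by
  cases l with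
  | nil =>
    exfalso
    have : j ∈ (∅ : Finset ι) := by
      rw [show (∅ : Finset ι) = @List.toFinset ι inst [] from rfl, h]; exact Finset.mem_singleton_self j
    exact absurd this (Finset.notMem_empty j)
  | cons a l =>
    have haj : a = j := by
      have : a ∈ @List.toFinset ι inst (a :: l) := by simp [List.mem_toFinset]
      rw [h] at this
      exact Finset.mem_singleton.mp this
    subst haj
    have hl : l = [] := by
      rw [List.eq_nil_iff_forall_not_mem]
      intro x hx
      have hx' : x ∈ @List.toFinset ι inst (a :: l) := by simp [List.mem_toFinset, hx]
      rw [h] at hx'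
      have : x = a := Finset.mem_singleton.mp hx'
      exact (List.nodup_cons.mp hnd).1 (this ▸ hx)
    rw [hl]

omit hA in
theorem finsetSumsTo_toList {q : ι → E} {F : Finset ι} {t : E}
    (h : A.FinsetSumsTo q F t) : A.ListSumsTo (F.toList.map q) t := by
  apply h F.toList F.nodup_toList
  letI : DecidableEq ι := Classical.decEq ι
  exact Finset.toList_toFinset F

theorem finsetSumsTo_empty (q : ι → E) : A.FinsetSumsTo q ∅ A.zero := by
  intro l hnd hl
  have : l = [] := list_eq_nil_of_toFinset _ hl
  subst this
  rfl

theorem finsetSumsTo_singleton (q : ι → E) (j : ι) :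
    A.FinsetSumsTo q {j} (q j) := by
  intro l hnd hl
  have : l = [j] := list_eq_singleton_of_toFinset _ hnd hl
  subst this
  exact ⟨A.zero, rfl, gZeroR hA (q j)⟩

end FinsetHelp

section Sigma

/-- The partial-sums set of the family `fun i => p i g`. -/
def SSet (A : PartialAlg E) {ι : Type v} (p : ι → E → E) (g : E) : Set E :=
  {t | ∃ F : Finset ι, A.FinsetSumsTo (fun i => p i g) F t}

/-- The supremum map of a family in the exocenter. -/
noncomputable def sigmaMap (A : PartialAlg E) {ι : Type v} (p : ι → E → E) : E → E :=
  fun g =>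
    letI : Nonempty E := ⟨A.zero⟩
    Classical.epsilon fun s => A.IsOrthosum (fun i => p i g) s

variable {ι : Type u} (hA : A.IsGPEA) (hCO : A.IsCOGPEA) {p : ι → E → E}
  (hexo : ∀ i, A.IsExo (p i)) (hdis : ∀ i j, i ≠ j → A.exoDisjoint (p i) (p j))
include hA hCO hexo hdis

omit hA hCO in
theorem gexOrth (g : E) : A.GEXOrthogonal (fun i => p i g) :=
  ⟨p, hexo, hdis, fun i => exo_idem (hexo i) g⟩

omit hA in
theorem sigma_spec (g : E) :
    A.IsOrthosum (fun i => p i g) (sigmaMap A p g) := by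
  letI : Nonempty E := ⟨A.zero⟩
  exact Classical.epsilon_spec (hCO.1 _ (gexOrth hexo hdis g))

omit hA in
theorem sigma_isSup (g : E) : A.IsSup (SSet A p g) (sigmaMap A p g) :=
  (sigma_spec hCO hexo hdis g).2

theorem mem_SSet_elim {g t : E} (h : t ∈ SSet A p g) :
    ∃ l : List ι, l.Nodup ∧ A.ListSumsTo (l.map fun i => p i g) t := by
  obtain ⟨F, hF⟩ := h
  exact ⟨F.toList, F.nodup_toList, finsetSumsTo_toList hF⟩

theorem sigma_le (g : E) : A.le (sigmaMap A p g) g := by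
  apply (sigma_isSup hCO hexo hdis g).2
  intro t ht
  obtain ⟨l, hnd, hsum⟩ := mem_SSet_elim hA hCO hexo hdis ht
  exact (listSum_props hA hexo hdis hnd hsum).1

theorem pj_mem_SSet (g : E) (j : ι) : p j g ∈ SSet A p g :=
  ⟨{j}, finsetSumsTo_singleton hA (fun i => p i g) j⟩

omit hCO hexo hdis in
theorem zero_mem_SSet (g : E) : A.zero ∈ SSet A p g :=
  ⟨∅, finsetSumsTo_empty hA (fun i => p i g)⟩

theorem sigma_fix (g : E) (j : ι) : p j (sigmaMap A p g) = p j g := by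
  have h1 : A.le (p j (sigmaMap A p g)) (p j g) :=
    exo_mono (hexo j) (sigma_le hA hCO hexo hdis g)
  have h2 : A.le (p j g) (sigmaMap A p g) :=
    (sigma_isSup hCO hexo hdis g).1 _ (pj_mem_SSet hA hCO hexo hdis g j)
  have h3 : A.le (p j g) (p j (sigmaMap A p g)) := by
    have := exo_mono (hexo j) h2
    rwa [exo_idem (hexo j) g] at this
  exact le_antisymm' hA h1 h3

theorem sigma_zero {g : E} (h : ∀ i, p i g = A.zero) :
    sigmaMap A p g = A.zero := by
  have hall : ∀ t ∈ SSet A p g, t = A.zero := by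
    intro t ht
    obtain ⟨l, hnd, hsum⟩ := mem_SSet_elim hA hCO hexo hdis ht
    refine listSum_zero hA ?_ hsum
    intro x hx
    obtain ⟨i, _, hi⟩ := List.mem_map.mp hx
    rw [← hi, h i]
  have hub : A.IsUB (SSet A p g) A.zero := by
    intro t ht
    rw [hall t ht]
    exact le_refl' hA A.zero
  exact eq_zero_of_le_zero hA ((sigma_isSup hCO hexo hdis g).2 _ hub)

theorem sigma_eq_of_family_eq {g h : E} (hfam : ∀ i, p i g = p i h) :
    sigmaMap A p g = sigmaMap A p h := by
  have h1 := sigma_spec hCO hexo hdis g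
  have h2 := sigma_spec hCO hexo hdis h
  have : (fun i => p i g) = fun i => p i h := funext hfam
  rw [this] at h1
  exact sup_unique hA h1.2 h2.2

theorem sigma_idem (g : E) :
    sigmaMap A p (sigmaMap A p g) = sigmaMap A p g :=
  sigma_eq_of_family_eq hA hCO hexo hdis (sigma_fix hA hCO hexo hdis g)

end Sigma

section SigmaBig

variable {ι : Type u} (hA : A.IsGPEA) (hCO : A.IsCOGPEA) {p : ι → E → E}
  (hexo : ∀ i, A.IsExo (p i)) (hdis : ∀ i j, i ≠ j → A.exoDisjoint (p i) (p j))
include hA hCO hexo hdis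

theorem sigma_perp {g h : E} (hg : sigmaMap A p g = g)
    (hh : sigmaMap A p h = A.zero) : A.perp g h := by
  have hpih : ∀ i, p i h = A.zero := by
    intro i
    have h1 : A.le (p i h) (sigmaMap A p h) :=
      (sigma_isSup hCO hexo hdis h).1 _ (pj_mem_SSet hA hCO hexo hdis h i)
    rw [hh] at h1
    exact eq_zero_of_le_zero hA h1
  have hdef := hCO.2 (fun i => p i g) (sigmaMap A p g)
    (gexOrth hexo hdis g) (sigma_spec hCO hexo hdis g) h
  have hperpi : ∀ i, A.perp (p i g) h :=
    fun i => exo_perp (hexo i) (exo_idem (hexo i) g) (hpih i)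
  obtain ⟨q1, hq1R⟩ : ∃ q, A.R h g q := by
    have := hdef.1 (fun i => by obtain ⟨s', h1, h2⟩ := hperpi i; exact ⟨s', h2⟩)
    rwa [hg] at this
  obtain ⟨q2, hq2R⟩ : ∃ q, A.R g h q := by
    have := hdef.2 (fun i => by obtain ⟨s', h1, h2⟩ := hperpi i; exact ⟨s', h1⟩)
    rwa [hg] at this
  have key : ∀ t, t ∈ SSet A p g → ∃ w, A.R t h w ∧ A.R h t w := by
    intro t ht
    obtain ⟨l, hnd, hsum⟩ := mem_SSet_elim hA hCO hexo hdis ht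
    have hτ := compList_exo hA hexo l
    have hρ := compl_exo hA hτ
    have hfixt : A.exoCompl (compList A p l) t = t :=
      compl_fix_of_zero hA hτ (compList_killsum hA hexo hdis hnd hsum)
    have hzeroh : A.exoCompl (compList A p l) h = A.zero :=
      compl_eq_zero_of_fix hA hτ (compList_fix hA hexo (fun j _ => hpih j))
    exact exo_perp hρ hfixt hzeroh
  choose w hw1 hw2 using key
  have hUB1 : ∀ t (ht : t ∈ SSet A p g), A.le (w t ht) q1 := by
    intro t ht
    obtain ⟨r, hr⟩ : A.le t g := by
      have := (sigma_isSup hCO hexo hdis g).1 t ht; rwa [hg] at this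
    obtain ⟨ab, hab1, hab2⟩ := gAssoc2 hA _ _ _ _ _ hr hq1R
    have : ab = w t ht := gFunc hA _ _ _ _ hab1 (hw2 t ht)
    exact ⟨r, this ▸ hab2⟩
  have hUB2 : ∀ t (ht : t ∈ SSet A p g), A.le (w t ht) q2 := by
    intro t ht
    have htg : A.le t g := by
      have := (sigma_isSup hCO hexo hdis g).1 t ht; rwa [hg] at this
    obtain ⟨r', hr'⟩ := (le_iff_right hA).mp htg
    obtain ⟨bc, hbc1, hbc2⟩ := gAssoc1 hA _ _ _ _ _ hr' hq2R
    have : bc = w t ht := gFunc hA _ _ _ _ hbc1 (hw1 t ht)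
    exact le_of_R_right hA (this ▸ hbc2)
  have least : ∀ b, (∀ t (ht : t ∈ SSet A p g), A.le (w t ht) b) →
      A.le q1 b ∧ A.le q2 b := by
    intro b hub
    constructor
    · have hBex : ∀ t, t ∈ SSet A p g → ∃ B, A.le t B ∧ A.R h B b := by
        intro t ht
        obtain ⟨x, hx⟩ := hub t ht
        obtain ⟨B, hB1, hB2⟩ := gAssoc1 hA _ _ _ _ _ (hw2 t ht) hx
        exact ⟨B, ⟨x, hB1⟩, hB2⟩
      obtain ⟨B0, hB0le, hB0⟩ := hBex A.zero (zero_mem_SSet hA g)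
      have hBub : A.IsUB (SSet A p g) B0 := by
        intro t ht
        obtain ⟨B, hB1, hB2⟩ := hBex t ht
        have : B = B0 := gCancL hA _ _ _ _ hB2 hB0
        exact this ▸ hB1
      have hgB0 : A.le g B0 := by
        have := (sigma_isSup hCO hexo hdis g).2 _ hBub; rwa [hg] at this
      obtain ⟨y, hy⟩ := hgB0
      obtain ⟨ab, hab1, hab2⟩ := gAssoc2 hA _ _ _ _ _ hy hB0
      have : ab = q1 := gFunc hA _ _ _ _ hab1 hq1R
      exact ⟨y, this ▸ hab2⟩
    · have hCex : ∀ t, t ∈ SSet A p g → ∃ C, (∃ x', A.R x' t C) ∧ A.R C h b := by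
        intro t ht
        obtain ⟨x', hx'⟩ := (le_iff_right hA).mp (hub t ht)
        obtain ⟨C, hC1, hC2⟩ := gAssoc2 hA _ _ _ _ _ (hw1 t ht) hx'
        exact ⟨C, ⟨x', hC1⟩, hC2⟩
      obtain ⟨C0, _, hC0⟩ := hCex A.zero (zero_mem_SSet hA g)
      have hCub : A.IsUB (SSet A p g) C0 := by
        intro t ht
        obtain ⟨C, ⟨x', hC1⟩, hC2⟩ := hCex t ht
        have : C = C0 := gCancR hA _ _ _ _ hC2 hC0
        exact le_of_R_right hA (this ▸ hC1)
      have hgC0 : A.le g C0 := by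
        have := (sigma_isSup hCO hexo hdis g).2 _ hCub; rwa [hg] at this
      obtain ⟨z, hz⟩ := (le_iff_right hA).mp hgC0
      obtain ⟨bc, hbc1, hbc2⟩ := gAssoc1 hA _ _ _ _ _ hz hC0
      have : bc = q2 := gFunc hA _ _ _ _ hbc1 hq2R
      exact le_of_R_right hA (this ▸ hbc2)
  have h12 : A.le q1 q2 := (least q2 hUB2).1
  have h21 : A.le q2 q1 := (least q1 hUB1).2
  have : q1 = q2 := le_antisymm' hA h12 h21
  exact ⟨q2, hq2R, this ▸ hq1R⟩

theorem sigma_add {e f s : E} (hefs : A.R e f s) :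
    A.R (sigmaMap A p e) (sigmaMap A p f) (sigmaMap A p s) := by
  have stepA : ∀ i, A.Defined (sigmaMap A p e) (p i f) := by
    intro i
    have hre : A.R (p i e) (A.exoCompl (p i) (sigmaMap A p e)) (sigmaMap A p e) := by
      have := decomp hA (hexo i) (sigmaMap A p e)
      rwa [sigma_fix hA hCO hexo hdis e i] at this
    have hr0 : p i (A.exoCompl (p i) (sigmaMap A p e)) = A.zero :=
      apply_compl_zero hA (hexo i) _
    obtain ⟨t, ht1, ht2⟩ := exo_perp (hexo i) (exo_idem (hexo i) f) hr0
    have hrles : A.le (A.exoCompl (p i) (sigmaMap A p e)) (A.exoCompl (p i) s) :=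
      compl_mono hA (hexo i)
        (le_trans' hA (sigma_le hA hCO hexo hdis e) (le_of_R hA hefs))
    obtain ⟨x, hx⟩ := hrles
    obtain ⟨d1, hd1a, hd1b⟩ := gAssoc2 hA _ _ _ _ _ hx (decomp hA (hexo i) s)
    have hpis := exo_add (hexo i) hefs
    obtain ⟨bc, hbc1, hbc2⟩ := gAssoc1 hA _ _ _ _ _ hpis hd1a
    have hbct : bc = t := gFunc hA _ _ _ _ hbc1 ht1
    rw [hbct] at hbc2
    obtain ⟨ab, hab1, hab2⟩ := gAssoc2 hA _ _ _ _ _ ht2 hbc2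
    have habe : ab = sigmaMap A p e := gFunc hA _ _ _ _ hab1 hre
    rw [habe] at hab2
    exact ⟨d1, hab2⟩
  obtain ⟨c, hc⟩ := (hCO.2 (fun i => p i f) _ (gexOrth hexo hdis f)
    (sigma_spec hCO hexo hdis f) (sigmaMap A p e)).1 stepA
  have stepC : ∀ i, p i c = p i s := by
    intro i
    have h1 := exo_add (hexo i) hc
    rw [sigma_fix hA hCO hexo hdis e i, sigma_fix hA hCO hexo hdis f i] at h1
    exact gFunc hA _ _ _ _ h1 (exo_add (hexo i) hefs)
  have stepE : A.le (sigmaMap A p s) c := by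
    have h1 := sigma_le hA hCO hexo hdis c
    rwa [sigma_eq_of_family_eq hA hCO hexo hdis stepC] at h1
  have stepF : A.le c (sigmaMap A p s) := by
    have hbUB : A.IsUB (SSet A p s) (sigmaMap A p s) := (sigma_isSup hCO hexo hdis s).1
    have hσeb : A.le (sigmaMap A p e) (sigmaMap A p s) := by
      apply (sigma_isSup hCO hexo hdis e).2
      intro t ht
      obtain ⟨F, hF⟩ := ht
      obtain ⟨v, hv⟩ := (sigma_spec hCO hexo hdis f).1 F
      obtain ⟨wS, hwS⟩ := (sigma_spec hCO hexo hdis s).1 F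
      have hR : A.R t v wS := listSum_add hA hexo hdis hefs F.nodup_toList
        (finsetSumsTo_toList hF) (finsetSumsTo_toList hv) (finsetSumsTo_toList hwS)
      exact le_trans' hA (le_of_R hA hR) (hbUB wS ⟨F, hwS⟩)
    obtain ⟨b1, hb1⟩ := hσeb
    have hσfb1 : A.le (sigmaMap A p f) b1 := by
      apply (sigma_isSup hCO hexo hdis f).2
      intro t ht
      obtain ⟨F, hF⟩ := ht
      obtain ⟨u, hu⟩ := (sigma_spec hCO hexo hdis e).1 F
      obtain ⟨wS, hwS⟩ := (sigma_spec hCO hexo hdis s).1 F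
      have hR : A.R u t wS := listSum_add hA hexo hdis hefs F.nodup_toList
        (finsetSumsTo_toList hu) (finsetSumsTo_toList hF) (finsetSumsTo_toList hwS)
      obtain ⟨xF, hxF⟩ : A.le u (sigmaMap A p e) :=
        (sigma_isSup hCO hexo hdis e).1 u ⟨F, hu⟩
      obtain ⟨xw, hxw⟩ : A.le wS (sigmaMap A p s) := hbUB wS ⟨F, hwS⟩
      obtain ⟨m1, hm1a, hm1b⟩ := gAssoc1 hA _ _ _ _ _ hxF hb1
      obtain ⟨m2, hm2a, hm2b⟩ := gAssoc1 hA _ _ _ _ _ hR hxw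
      have hmm : m2 = m1 := gCancL hA _ _ _ _ hm2b hm1b
      rw [hmm] at hm2a
      have hτ := compList_exo hA hexo (p := p) F.toList
      have hρ := compl_exo hA hτ
      have hxF0 : ∀ j ∈ F.toList, p j xF = A.zero := by
        intro j hj
        have h1 := exo_add (hexo j) hxF
        rw [sigma_fix hA hCO hexo hdis e j,
          (listSum_props hA hexo hdis F.nodup_toList (finsetSumsTo_toList hu)).2.2 j hj] at h1
        exact gCancL hA _ _ _ _ h1 (gZeroR hA (p j e))
      have hρx : A.exoCompl (compList A p F.toList) xF = A.zero :=
        compl_eq_zero_of_fix hA hτ (compList_fix hA hexo hxF0)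
      have hρt : A.exoCompl (compList A p F.toList) t = t :=
        compl_fix_of_zero hA hτ
          (compList_killsum hA hexo hdis F.nodup_toList (finsetSumsTo_toList hF))
      have h5 := exo_add hρ hm1a
      rw [hρx] at h5
      have h6 : A.exoCompl (compList A p F.toList) m1 =
          A.exoCompl (compList A p F.toList) b1 := gFunc hA _ _ _ _ h5 (gZeroL hA _)
      have h7 := exo_add hρ hm2a
      rw [hρt, h6] at h7
      exact le_trans' hA (le_of_R hA h7) (exo_le hρ b1)
    obtain ⟨y, hy⟩ := hσfb1
    obtain ⟨ab, hab1, hab2⟩ := gAssoc2 hA _ _ _ _ _ hy hb1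
    have habc : ab = c := gFunc hA _ _ _ _ hab1 hc
    rw [habc] at hab2
    exact ⟨y, hab2⟩
  have : c = sigmaMap A p s := le_antisymm' hA stepF stepE
  rwa [this] at hc

theorem sigma_exo : A.IsExo (sigmaMap A p) :=
  ⟨fun e f s h => sigma_add hA hCO hexo hdis h,
   fun g => sigma_idem hA hCO hexo hdis g,
   fun g => sigma_le hA hCO hexo hdis g,
   fun g h hg hh => sigma_perp hA hCO hexo hdis hg hh⟩

theorem sigma_ub (j : ι) : A.exoLe (p j) (sigmaMap A p) :=
  funext fun g => (sigma_fix hA hCO hexo hdis g j).symm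

theorem sigma_lub {β : E → E} (hβ : A.IsExo β)
    (h : ∀ i, A.exoLe (p i) β) : A.exoLe (sigmaMap A p) β := by
  funext g
  show sigmaMap A p g = sigmaMap A p (β g)
  exact (sigma_eq_of_family_eq hA hCO hexo hdis
    (fun i => (congrFun (h i) g).symm)).symm

end SigmaBig

end PartialAlg
end GPEApaper

open GPEApaper PartialAlg in
/-- Theorem 6.2: in a COGPEA, every element e has an exocentral cover γ_e,
and γ_e is the infimum of {π ∈ ΓEX(E) : π e = e} in ΓEX(E). -/
theorem stmt_15 {E : Type u} (A : PartialAlg E) (hA : A.IsGPEA)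
    (hCO : A.IsCOGPEA) (e : E) :
    ∃ γ : E → E, A.IsExoCover e γ ∧
      (∀ π : E → E, A.IsExo π → π e = e → A.exoLe γ π) ∧
      ∀ β : E → E, A.IsExo β →
        (∀ π : E → E, A.IsExo π → π e = e → A.exoLe β π) → A.exoLe β γ := by
  classical
  let T : Set (E → E) := {ξ | A.IsExo ξ ∧ ξ e = A.zero}
  let C : Set (Set (E → E)) := {D | D ⊆ T ∧ (∀ ξ ∈ D, ξ ≠ fun _ => A.zero) ∧
      ∀ ξ ∈ D, ∀ π ∈ D, ξ ≠ π → A.exoDisjoint ξ π}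
  have hchainUB : ∀ c ⊆ C, IsChain (· ⊆ ·) c →
      ∃ ub ∈ C, ∀ s ∈ c, s ⊆ ub := by
    intro c hcC hchain
    refine ⟨⋃₀ c, ⟨?_, ?_, ?_⟩, fun s hs => Set.subset_sUnion_of_mem hs⟩
    · rintro x ⟨D, hDc, hxD⟩
      exact (hcC hDc).1 hxD
    · rintro ξ ⟨D, hDc, hξD⟩
      exact (hcC hDc).2.1 ξ hξD
    · rintro ξ ⟨D1, hD1c, hξD1⟩ π ⟨D2, hD2c, hπD2⟩ hne
      by_cases hDD : D1 = D2
      · subst hDD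
        exact (hcC hD1c).2.2 ξ hξD1 π hπD2 hne
      · rcases hchain hD1c hD2c hDD with h | h
        · exact (hcC hD2c).2.2 ξ (h hξD1) π hπD2 hne
        · exact (hcC hD1c).2.2 ξ hξD1 π (h hπD2) hne
  obtain ⟨M, hM⟩ := zorn_subset C hchainUB
  have hMC : M ⊆ T ∧ (∀ ξ ∈ M, ξ ≠ fun _ => A.zero) ∧
      ∀ ξ ∈ M, ∀ π ∈ M, ξ ≠ π → A.exoDisjoint ξ π := hM.1
  let p : ↥M → E → E := fun m => (m : E → E)
  have hmemT : ∀ i : ↥M, A.IsExo (p i) ∧ p i e = A.zero :=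
    fun i => hMC.1 i.2
  have hexo : ∀ i : ↥M, A.IsExo (p i) := fun i => (hmemT i).1
  have hdis : ∀ i j : ↥M, i ≠ j → A.exoDisjoint (p i) (p j) :=
    fun i j hij => hMC.2.2 (p i) i.2 (p j) j.2 (fun h => hij (Subtype.ext h))
  have hσexo : A.IsExo (sigmaMap A p) := sigma_exo hA hCO hexo hdis
  have hσe : sigmaMap A p e = A.zero :=
    sigma_zero hA hCO hexo hdis (fun i => (hmemT i).2)
  have hγexo : A.IsExo (A.exoCompl (sigmaMap A p)) := compl_exo hA hσexo
  have hγe : A.exoCompl (sigmaMap A p) e = e := compl_fix_of_zero hA hσexo hσe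
  have hmain : ∀ π : E → E, A.IsExo π → π e = e →
      A.exoLe (A.exoCompl (sigmaMap A p)) π := by
    intro π hπ hπe
    have hπ'T : A.exoCompl π ∈ T :=
      ⟨compl_exo hA hπ, compl_eq_zero_of_fix hA hπ hπe⟩
    have hTle : ∀ t ∈ T, A.exoLe t (sigmaMap A p) := by
      intro t htT
      have htT' : A.IsExo t ∧ t e = A.zero := htT
      have htexo := htT'.1
      by_contra hnot
      have hm0exo : A.IsExo (fun f => t (A.exoCompl (sigmaMap A p) f)) :=
        comp_exo hA htexo (compl_exo hA hσexo)
      have hm0e : t (A.exoCompl (sigmaMap A p) e) = A.zero := by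
        rw [compl_fix_of_zero hA hσexo hσe]
        exact htT'.2
      have hm0ne : (fun f => t (A.exoCompl (sigmaMap A p) f)) ≠ fun _ => A.zero := by
        intro h0
        apply hnot
        funext f
        show t f = t (sigmaMap A p f)
        have hd := exo_add htexo (decomp hA hσexo f)
        have h1 : t (A.exoCompl (sigmaMap A p) f) = A.zero := congrFun h0 f
        rw [h1] at hd
        exact gFunc hA _ _ _ _ hd (gZeroR hA _)
      have hdism : ∀ m ∈ M, A.exoDisjoint m (fun f => t (A.exoCompl (sigmaMap A p) f)) ∧
          A.exoDisjoint (fun f => t (A.exoCompl (sigmaMap A p) f)) m := by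
        intro m hm
        have hmexo : A.IsExo m := (hMC.1 hm).1
        have hmle : A.exoLe m (sigmaMap A p) := sigma_ub hA hCO hexo hdis ⟨m, hm⟩
        constructor
        · intro f
          show m (t (A.exoCompl (sigmaMap A p) f)) = A.zero
          have h1 : m (t (A.exoCompl (sigmaMap A p) f)) =
              m (sigmaMap A p (t (A.exoCompl (sigmaMap A p) f))) := congrFun hmle _
          rw [h1, exo_commute hA hσexo htexo, apply_compl_zero hA hσexo,
            exo_zero hA htexo, exo_zero hA hmexo]
        · intro f
          show t (A.exoCompl (sigmaMap A p) (m f)) = A.zero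
          have h1 : m f = m (sigmaMap A p f) := congrFun hmle f
          rw [h1, exo_commute hA (compl_exo hA hσexo) hmexo,
            compl_apply_zero hA hσexo, exo_zero hA hmexo, exo_zero hA htexo]
      have hm0M : (fun f => t (A.exoCompl (sigmaMap A p) f)) ∉ M := by
        intro hmem
        apply hm0ne
        funext f
        have h1 : t (A.exoCompl (sigmaMap A p) f) =
            t (A.exoCompl (sigmaMap A p) (sigmaMap A p f)) :=
          congrFun (sigma_ub hA hCO hexo hdis ⟨_, hmem⟩) f
        show t (A.exoCompl (sigmaMap A p) f) = A.zero
        rw [h1, compl_apply_zero hA hσexo, exo_zero hA htexo]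
      have hins : insert (fun f => t (A.exoCompl (sigmaMap A p) f)) M ∈ C := by
        refine ⟨?_, ?_, ?_⟩
        · intro x hx
          rcases Set.mem_insert_iff.mp hx with h | h
          · exact h ▸ (⟨hm0exo, hm0e⟩ : _ ∧ _)
          · exact hMC.1 h
        · intro ξ hξ
          rcases Set.mem_insert_iff.mp hξ with h | h
          · exact h ▸ hm0ne
          · exact hMC.2.1 ξ h
        · intro ξ hξ π' hπ' hne
          rcases Set.mem_insert_iff.mp hξ with h1 | h1 <;>
            rcases Set.mem_insert_iff.mp hπ' with h2 | h2
          · exact absurd (h1.trans h2.symm) hne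
          · exact h1 ▸ (hdism π' h2).2
          · exact h2 ▸ (hdism ξ h1).1
          · exact hMC.2.2 ξ h1 π' h2 hne
      have hsub := hM.2 hins (Set.subset_insert _ M)
      exact hm0M (hsub (Set.mem_insert _ M))
    have h1 : A.exoLe (A.exoCompl π) (sigmaMap A p) := hTle _ hπ'T
    have h2 := compl_antitone hA hσexo (compl_exo hA hπ) h1
    rwa [compl_compl hA hπ] at h2
  exact ⟨A.exoCompl (sigmaMap A p), ⟨hγexo, hγe, hmain⟩, hmain,
    fun β hβ hb => hb _ hγexo hγe⟩
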